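/- Equation of the critical manifold (equation (c-mfd)): Let γ>1, R>0, μ>0, τ>0, κ>0, v₋>0, p₋>0 and set σ* := √(γp₋/v₋). Then for all real numbers w₀ and w₁, the equation 0 = (1/(μτκ))·((Rσ*/(γ−1)) v₋ γ p₋ ((γ+1)/2) w₀ − (Rσ*/(γ−1)) v₋ γ p₋ w₀²) − (R γ p₋ v₋/((γ−1)κ))·((μ+τ)/(μτ)) w₁ − (R σ* v₋ γ p₋/(μτκ))·(1/2) w₀² + (R v₋/(μτκ)) p₋ τ w₁ − (1/(μτ))(γ−1) v₋ p₋ w₁ holds if and only if w₁ = A (w₀ − w₀²), where A := (R γ σ* / (Rτ + Rγμ + (γ−1)²κ))·((γ+1)/2). -/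

import Mathlib

open Real Filter Topology

/-- Equation of the critical manifold: with `σ* = √(γ p₋ / v₋)` and
`A = (R γ σ* / (R τ + R γ μ + (γ-1)² κ)) ((γ+1)/2)`, the equation of the critical
manifold holds iff `w₁ = A (w₀ - w₀²)`. -/
theorem critical_manifold_equation
    (γ R μ τ κ v p σs A : ℝ) (hγ : 1 < γ) (hR : 0 < R) (hμ : 0 < μ) (hτ : 0 < τ)
    (hκ : 0 < κ) (hv : 0 < v) (hp : 0 < p)
    (hσs : σs = Real.sqrt (γ * p / v))
    (hA : A = R * γ * σs / (R * τ + R * γ * μ + (γ - 1) ^ 2 * κ) * ((γ + 1) / 2)) :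
    ∀ w₀ w₁ : ℝ,
      (0 = (1 / (μ * τ * κ)) *
            (R * σs / (γ - 1) * v * γ * p * ((γ + 1) / 2) * w₀ -
              R * σs / (γ - 1) * v * γ * p * w₀ ^ 2) -
          R * γ * p * v / ((γ - 1) * κ) * ((μ + τ) / (μ * τ)) * w₁ -
          R * σs * v * γ * p / (μ * τ * κ) * (1 / 2) * w₀ ^ 2 +
          R * v / (μ * τ * κ) * p * τ * w₁ -
          1 / (μ * τ) * (γ - 1) * v * p * w₁) ↔
        w₁ = A * (w₀ - w₀ ^ 2) := by
  intro w₀ w₁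
  have hγ1 : γ - 1 ≠ 0 := by linarith
  have hden : R * τ + R * γ * μ + (γ - 1) ^ 2 * κ > 0 := by positivity
  subst hA
  have key : ((R * τ + R * γ * μ + (γ - 1) ^ 2 * κ) * w₁
      = R * γ * σs * ((γ + 1) / 2) * (w₀ - w₀ ^ 2)) ↔
        w₁ = R * γ * σs / (R * τ + R * γ * μ + (γ - 1) ^ 2 * κ) * ((γ + 1) / 2)
          * (w₀ - w₀ ^ 2) := by
    rw [div_mul_eq_mul_div, div_mul_eq_mul_div, eq_div_iff hden.ne', mul_comm w₁]
  rw [← key]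
  have hG : ((γ - 1) ^ 2 * μ ^ 4 * τ ^ 4 * κ ^ 3 * 4 * v * p) ≠ 0 := by positivity
  constructor <;> intro h
  · field_simp at h
    have h3 : ((γ - 1) ^ 2 * μ ^ 4 * τ ^ 4 * κ ^ 3 * 4 * v * p) *
        ((R * τ + R * γ * μ + (γ - 1) ^ 2 * κ) * w₁
          - R * γ * σs * ((γ + 1) / 2) * (w₀ - w₀ ^ 2)) = 0 := by
      linear_combination ((γ - 1) ^ 2 * μ ^ 4 * τ ^ 4 * κ ^ 3 * 2) * h
    have := (mul_eq_zero.mp h3).resolve_left hG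
    linarith [this]
  · field_simp
    linear_combination (2 * v * p) * h
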